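/- For every E0 > 0 and every C > 0 there exists γ0 > 0 such that for all γ ∈ (0, γ0) and all μ ∈ (0, Cγ], the set of transition frequencies for the parameters (E0, γ, μ) contains at most three elements. -/

import Mathlib

/-- The cubic polynomial `f(P) = P(P-1)^2 + αP - β`. -/
noncomputable def cubicF (α β P : ℝ) : ℝ := P * (P - 1)^2 + α * P - β

/-- Its derivative `f'(P) = 3P^2 - 4P + 1 + α`. -/
noncomputable def cubicF' (α P : ℝ) : ℝ := 3 * P^2 - 4 * P + 1 + α

/-- `α(ω; γ, E0) = 4γ⁴/(ω σ² ρ²)` with `ρ = ω+4`, `σ = ω - E0 - γ²/ρ`. -/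
noncomputable def alphaPar (E0 γ ω : ℝ) : ℝ :=
  4 * γ^4 / (ω * (ω - E0 - γ^2 / (ω + 4))^2 * (ω + 4)^2)

/-- `β(ω; γ, μ, E0) = 4γ²μ/(σ³ ρ)`. -/
noncomputable def betaPar (E0 γ μ ω : ℝ) : ℝ :=
  4 * γ^2 * μ / ((ω - E0 - γ^2 / (ω + 4))^3 * (ω + 4))

/-- `ω` is a transition frequency for the parameters `(E0, γ, μ)`. -/
def IsTransitionFreq (E0 γ μ ω : ℝ) : Prop :=
  0 < ω ∧ (ω - E0) * (ω + 4) - γ^2 > 0 ∧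
    ∃ P : ℝ, cubicF (alphaPar E0 γ ω) (betaPar E0 γ μ ω) P = 0 ∧
      cubicF' (alphaPar E0 γ ω) P = 0

set_option maxHeartbeats 1600000

section AMTFsection
namespace AMTF

noncomputable def qf (E0 γ x : ℝ) : ℝ := (x - E0) * (x + 4) - γ^2
noncomputable def alf (E0 γ x : ℝ) : ℝ := 4 * γ^4 / (x * (qf E0 γ x)^2)
noncomputable def bef (E0 γ μ x : ℝ) : ℝ := 4 * γ^2 * μ * (x + 4)^2 / (qf E0 γ x)^3

lemma qf_lt {E0 γ x y : ℝ} (hE0 : 0 < E0) (hE : E0 < x) (hxy : x < y) :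
    qf E0 γ x < qf E0 γ y := by
  have h1 : qf E0 γ y - qf E0 γ x = (y-x) * (y+x+4-E0) := by unfold qf; ring
  nlinarith [mul_pos (show (0:ℝ) < y - x by linarith) (show (0:ℝ) < y+x+4-E0 by linarith)]

lemma xq2_lt {E0 γ x y : ℝ} (hE0 : 0 < E0) (hE : E0 < x)
    (hq : 0 < qf E0 γ x) (hxy : x < y) :
    x * (qf E0 γ x)^2 < y * (qf E0 γ y)^2 := by
  have hqq := qf_lt (γ := γ) hE0 hE hxy
  have hx : 0 < x := lt_trans hE0 hE
  have h2 : (qf E0 γ x)^2 < (qf E0 γ y)^2 := by nlinarith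
  calc x * (qf E0 γ x)^2 < y * (qf E0 γ x)^2 :=
        mul_lt_mul_of_pos_right hxy (by positivity)
    _ < y * (qf E0 γ y)^2 := mul_lt_mul_of_pos_left h2 (by linarith)

lemma alf_lt {E0 γ x y : ℝ} (hγ : 0 < γ) (hE0 : 0 < E0) (hE : E0 < x)
    (hq : 0 < qf E0 γ x) (hxy : x < y) : alf E0 γ y < alf E0 γ x := by
  have hx : 0 < x := lt_trans hE0 hE
  unfold alf
  exact div_lt_div_of_pos_left (by positivity) (by positivity) (xq2_lt hE0 hE hq hxy)

/-- key quantitative monotonicity of L (decreasing) near E0 -/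
lemma key_L {E0 γ x y : ℝ} (hE0 : 0 < E0) (hE : E0 < x) (hxy : x < y)
    (hq : 0 < qf E0 γ x)
    (hx1 : x < E0 + 1) (hy1 : y < E0 + 1)
    (hqM : (3*(E0+1)^2 + 16*(E0+1) + 16) * qf E0 γ x < E0*(E0+4)^3) :
    y * (y+4)^2 * qf E0 γ x < x * (x+4)^2 * qf E0 γ y := by
  have h6 : 0 < y - x := by linarith
  have hx : 0 < x := lt_trans hE0 hE
  have h1 : qf E0 γ y - qf E0 γ x = (y - x) * (y + x + 4 - E0) := by unfold qf; ring
  have h3 : E0*(E0+4)^2 ≤ x*(x+4)^2 := by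
    have h31 : (E0+4)^2 ≤ (x+4)^2 := by nlinarith
    calc E0*(E0+4)^2 ≤ x*(E0+4)^2 := by nlinarith
      _ ≤ x*(x+4)^2 := by nlinarith
  have h4 : y^2 + y*x + x^2 + 8*y + 8*x + 16 ≤ 3*(E0+1)^2 + 16*(E0+1) + 16 := by
    nlinarith [mul_le_mul (le_of_lt hy1) (le_of_lt hx1) (by linarith : (0:ℝ) ≤ x)
      (by linarith : (0:ℝ) ≤ E0+1), sq_nonneg (E0+1-y), sq_nonneg (E0+1-x)]
  have e1 : (y-x) * (E0*(E0+4)^3) ≤ x*(x+4)^2 * (qf E0 γ y - qf E0 γ x) := by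
    rw [h1]
    have h5 : E0 + 4 ≤ y + x + 4 - E0 := by linarith
    have hb : (y-x)*(E0+4) ≤ (y-x)*(y+x+4-E0) := by
      exact mul_le_mul_of_nonneg_left h5 h6.le
    have hbpos : 0 < (y-x)*(E0+4) := by nlinarith
    calc (y-x) * (E0*(E0+4)^3) = E0*(E0+4)^2 * ((y-x)*(E0+4)) := by ring
      _ ≤ x*(x+4)^2 * ((y-x)*(E0+4)) := mul_le_mul_of_nonneg_right h3 hbpos.le
      _ ≤ x*(x+4)^2 * ((y-x)*(y+x+4-E0)) := by
          apply mul_le_mul_of_nonneg_left hb (mul_nonneg hx.le (sq_nonneg _))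
  have e2 : (y*(y+4)^2 - x*(x+4)^2) * qf E0 γ x
      ≤ (y-x) * ((3*(E0+1)^2 + 16*(E0+1) + 16) * qf E0 γ x) := by
    have h2 : (y*(y+4)^2 - x*(x+4)^2) * qf E0 γ x
        = (y^2 + y*x + x^2 + 8*y + 8*x + 16) * ((y-x) * qf E0 γ x) := by ring
    rw [h2]
    calc (y^2 + y*x + x^2 + 8*y + 8*x + 16) * ((y-x) * qf E0 γ x)
        ≤ (3*(E0+1)^2 + 16*(E0+1) + 16) * ((y-x) * qf E0 γ x) := by
          apply mul_le_mul_of_nonneg_right h4 (by positivity)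
      _ = (y-x) * ((3*(E0+1)^2 + 16*(E0+1) + 16) * qf E0 γ x) := by ring
  nlinarith [e1, e2, mul_lt_mul_of_pos_left hqM h6]

lemma beta_lower {t : ℝ} (h1 : 1/3 ≤ t) (h2 : t < 2/3) : 4/27 < 2*t*(1-t)^2 := by
  have key : 2*t*(1-t)^2 - 4/27 = (2/27) * ((2-3*t) * (-(9*t^2-12*t+1))) := by ring
  have hq : 9*t^2-12*t+1 < 0 := by nlinarith [mul_nonneg (by linarith : (0:ℝ) ≤ 3*t-1) (by linarith : (0:ℝ) ≤ 2-3*t)]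
  nlinarith [mul_pos (by linarith : (0:ℝ) < 2-3*t) (by linarith : (0:ℝ) < -(9*t^2-12*t+1))]

lemma ttail {t t' : ℝ} (ht1 : 1/3 ≤ t) (ht2 : t < 2/3) (ht1' : 1/3 ≤ t') (ht2' : t' < 2/3)
    (h : (1-t')^2*(2-3*t) < (1-t)^2*(2-3*t')) : t' < t := by
  by_contra hc
  push_neg at hc  -- t ≤ t'
  have key : (1-t)^2*(2-3*t') - (1-t')^2*(2-3*t) = (t'-t) * (1-2*t-2*t'+3*t*t') := by ring
  have hbr : 1-2*t-2*t'+3*t*t' ≤ 0 := by nlinarith [mul_nonneg (by linarith : (0:ℝ) ≤ t'-1/3) (by linarith : (0:ℝ) ≤ 2-3*t)]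
  nlinarith [mul_nonneg (by linarith : (0:ℝ) ≤ t'-t) (by linarith : (0:ℝ) ≤ -(1-2*t-2*t'+3*t*t'))]

lemma Aset_pair {E0 C γ μ x y : ℝ} (hE0 : 0 < E0) (hC : 0 < C) (hγ : 0 < γ)
    (hγ1 : γ < 1) (hμ : 0 < μ) (hμC : μ ≤ C*γ)
    (hc3 : 216*C*γ^3 ≤ E0+4)
    (hc4 : (3*(E0+1)^2+16*(E0+1)+16)^3 * (27*C*(E0+5)^2*γ^3) < (E0*(E0+4)^3)^3)
    (hxy : x < y) (hxE : E0 < x) (hqx : 0 < qf E0 γ x)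
    (hyE : E0 < y) (hqy : 0 < qf E0 γ y)
    (tx : ∃ t, 1/3 ≤ t ∧ t < 2/3 ∧ alf E0 γ x = t*(2-3*t) ∧ bef E0 γ μ x = 2*t*(1-t)^2)
    (ty : ∃ t, 1/3 ≤ t ∧ t < 2/3 ∧ alf E0 γ y = t*(2-3*t) ∧ bef E0 γ μ y = 2*t*(1-t)^2) :
    False := by
  obtain ⟨t, ht1, ht2, hat, hbt⟩ := tx
  obtain ⟨t', ht1', ht2', hat', hbt'⟩ := ty
  have hx : 0 < x := lt_trans hE0 hxE
  have hy : 0 < y := lt_trans hE0 hyE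
  have hρx : (0:ℝ) < x + 4 := by linarith
  have hρy : (0:ℝ) < y + 4 := by linarith
  -- cube bounds on q
  have hqc : ∀ z : ℝ, 0 < z → 0 < qf E0 γ z → bef E0 γ μ z > 4/27 →
      (qf E0 γ z)^3 < 27*γ^2*μ*(z+4)^2 := by
    intro z hz hqz hbz
    unfold bef at hbz
    rw [gt_iff_lt, lt_div_iff₀ (by positivity)] at hbz
    linarith
  have hqcx : (qf E0 γ x)^3 < 27*γ^2*μ*(x+4)^2 :=
    hqc x hx hqx (by rw [hbt]; exact beta_lower ht1 ht2)
  have hqcy : (qf E0 γ y)^3 < 27*γ^2*μ*(y+4)^2 :=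
    hqc y hy hqy (by rw [hbt']; exact beta_lower ht1' ht2')
  -- both x and y below E0 + 1
  have hbound : ∀ z : ℝ, E0 < z → 0 < qf E0 γ z →
      (qf E0 γ z)^3 < 27*γ^2*μ*(z+4)^2 → z < E0 + 1 := by
    intro z hzE hqz hq3
    by_contra hcon
    push_neg at hcon
    have hρz : (0:ℝ) < z + 4 := by linarith
    have h1 : (z+4)/2 ≤ qf E0 γ z := by
      unfold qf
      nlinarith [mul_le_mul_of_nonneg_right (by linarith : (1:ℝ) ≤ z - E0) hρz.le]
    have h2 : (z+4)^3/8 ≤ (qf E0 γ z)^3 := by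
      have := pow_le_pow_left₀ (by positivity : (0:ℝ) ≤ (z+4)/2) h1 3
      calc (z+4)^3/8 = ((z+4)/2)^3 := by ring
        _ ≤ (qf E0 γ z)^3 := this
    have h3 : 27*γ^2*μ*(z+4)^2 ≤ 27*C*γ^3*(z+4)^2 := by
      nlinarith [mul_le_mul_of_nonneg_left hμC (show (0:ℝ) ≤ 27*γ^2*(z+4)^2 by positivity)]
    nlinarith [mul_le_mul_of_nonneg_right hc3 (sq_nonneg (z+4))]
  have hxb : x < E0 + 1 := hbound x hxE hqx hqcx
  have hyb : y < E0 + 1 := hbound y hyE hqy hqcy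
  -- M * q x < E0 (E0+4)^3
  set M : ℝ := 3*(E0+1)^2+16*(E0+1)+16 with hM
  have hMpos : 0 < M := by rw [hM]; nlinarith
  have hq3 : (qf E0 γ x)^3 < 27*C*(E0+5)^2*γ^3 := by
    have h45 : (x+4)^2 ≤ (E0+5)^2 := by nlinarith
    have : 27*γ^2*μ*(x+4)^2 ≤ 27*C*(E0+5)^2*γ^3 := by
      nlinarith [mul_le_mul hμC h45 (by positivity) (by positivity : (0:ℝ) ≤ C*γ),
        sq_nonneg γ, mul_pos hγ hγ]
    linarith
  have hMq : M * qf E0 γ x < E0*(E0+4)^3 := by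
    have hcube : (M * qf E0 γ x)^3 < (E0*(E0+4)^3)^3 := by
      calc (M * qf E0 γ x)^3 = M^3 * (qf E0 γ x)^3 := by ring
        _ < M^3 * (27*C*(E0+5)^2*γ^3) := by
            exact mul_lt_mul_of_pos_left hq3 (by positivity)
        _ < (E0*(E0+4)^3)^3 := hc4
    exact lt_of_pow_lt_pow_left₀ 3 (by positivity) hcube
  have hkey := key_L hE0 hxE hxy hqx hxb hyb hMq
  -- cross inequality for beta/alpha
  have H : bef E0 γ μ y * alf E0 γ x < bef E0 γ μ x * alf E0 γ y := by
    have hKpos : (0:ℝ) < 16*γ^6*μ/(x*y*(qf E0 γ x)^3*(qf E0 γ y)^3) := by positivity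
    have e1 : bef E0 γ μ y * alf E0 γ x
        = (16*γ^6*μ/(x*y*(qf E0 γ x)^3*(qf E0 γ y)^3)) * (y*(y+4)^2*qf E0 γ x) := by
      unfold bef alf; field_simp; ring
    have e2 : bef E0 γ μ x * alf E0 γ y
        = (16*γ^6*μ/(x*y*(qf E0 γ x)^3*(qf E0 γ y)^3)) * (x*(x+4)^2*qf E0 γ y) := by
      unfold bef alf; field_simp; ring
    rw [e1, e2]
    exact mul_lt_mul_of_pos_left hkey hKpos
  rw [hbt, hat', hbt', hat] at H
  have h2tt : (0:ℝ) < 2*t*t' := by nlinarith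
  have hr : (1-t')^2*(2-3*t) < (1-t)^2*(2-3*t') := by
    have h' : (2*t*t') * ((1-t')^2*(2-3*t)) < (2*t*t') * ((1-t)^2*(2-3*t')) := by
      rw [show (2*t*t') * ((1-t')^2*(2-3*t)) = 2*t'*(1-t')^2*(t*(2-3*t)) from by ring,
        show (2*t*t') * ((1-t)^2*(2-3*t')) = 2*t*(1-t)^2*(t'*(2-3*t')) from by ring]
      exact H
    exact lt_of_mul_lt_mul_left h' h2tt.le
  have htt : t' < t := ttail ht1 ht2 ht1' ht2' hr
  have hα : alf E0 γ y < alf E0 γ x := alf_lt hγ hE0 hxE hqx hxy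
  rw [hat, hat'] at hα
  nlinarith [mul_pos (by linarith : (0:ℝ) < t - t') (by linarith : (0:ℝ) < 3*(t+t')-2)]

noncomputable def Nf (E0 γ x : ℝ) : ℝ := (x+4)*(x^2-2*E0*x-4*E0) - γ^2*(3*x+4)
noncomputable def Ndf (E0 γ x : ℝ) : ℝ := (x^2-2*E0*x-4*E0) + (x+4)*(2*x-2*E0) - 3*γ^2
noncomputable def Bf (E0 γ x : ℝ) : ℝ := qf E0 γ x + 2*x*(2*x+4-E0)

/-- T ≥ 0 : the core polynomial inequality -/
lemma T_nonneg {E0 g x : ℝ} (hE0 : 0 < E0) (hEx : E0 < x) (hg : 0 ≤ g) :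
    0 ≤ ((x^2-2*E0*x-4*E0) + (x+4)*(2*x-2*E0) - 3*g) * (2*x*(2*x+4-E0) + ((x-E0)*(x+4)-g))
      - ((x+4)*(x^2-2*E0*x-4*E0) - g*(3*x+4)) * (3*(2*x+4-E0) + 4*x) := by
  set a := x - E0 with ha
  set ρ := x + 4 with hρ
  set m := x^2 - 2*E0*x - 4*E0 with hm
  have hapos : 0 < a := by rw [ha]; linarith
  have hx : 0 < x := lt_trans hE0 hEx
  have hρpos : (0:ℝ) < ρ := by rw [hρ]; linarith
  have hdecomp : ((x^2-2*E0*x-4*E0) + (x+4)*(2*x-2*E0) - 3*g) * (2*x*(2*x+4-E0) + ((x-E0)*(x+4)-g))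
      - ((x+4)*(x^2-2*E0*x-4*E0) - g*(3*x+4)) * (3*(2*x+4-E0) + 4*x)
      = (2*a*ρ*(2*x*ρ+2*x*a+a*ρ) - m*(2*x*(E0+4)+2*a*ρ+3*ρ^2))
        + (g * (12*x^2 + (32+4*E0)*x + 48+12*E0) + 3*g^2) := by
    rw [ha, hρ, hm]; ring
  rw [hdecomp]
  have hD : 0 ≤ g * (12*x^2 + (32+4*E0)*x + 48+12*E0) + 3*g^2 := by
    have h0 : (0:ℝ) ≤ 12*x^2 + (32+4*E0)*x + 48+12*E0 := by positivity
    positivity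
  have hbig : 0 ≤ 2*x*(E0+4)+2*a*ρ+3*ρ^2 := by
    have h1 : 0 ≤ a*ρ := by positivity
    nlinarith [sq_nonneg ρ]
  rcases le_or_gt m 0 with hmneg | hmpos
  · have h1 : 0 ≤ 2*a*ρ*(2*x*ρ+2*x*a+a*ρ) := by positivity
    nlinarith [mul_nonneg (neg_nonneg.mpr hmneg) hbig]
  · have hmax : m ≤ a*x := by rw [hm, ha]; nlinarith
    have hEρ : E0*ρ ≤ a*x := by
      rw [hm] at hmpos; rw [ha, hρ]; nlinarith
    have hxρ2 : x^2 ≤ ρ^2 := by nlinarith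
    have k12 : 2*x^2*E0*ρ ≤ 2*a*x*ρ^2 := by
      have k1 : 2*x^2*E0*ρ ≤ 2*a*x^3 := by
        nlinarith [mul_le_mul_of_nonneg_left hEρ (by positivity : (0:ℝ) ≤ 2*x^2)]
      have k2 : 2*a*x^3 ≤ 2*a*x*ρ^2 := by
        nlinarith [mul_le_mul_of_nonneg_left hxρ2 (by positivity : (0:ℝ) ≤ 2*a*x)]
      linarith
    have hbr : 0 ≤ x*ρ^2 + 2*a*x*ρ + 2*a*ρ^2 - 2*x^2*(E0+4) := by
      have k3 : (0:ℝ) ≤ x*ρ*(x^2+16) := by positivity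
      have k4 : (0:ℝ) ≤ 2*a*ρ^3 := by positivity
      have hid : ρ*(x*ρ^2 + 2*a*x*ρ + 2*a*ρ^2 - 2*x^2*(E0+4))
          = (2*a*x*ρ^2 - 2*x^2*E0*ρ) + x*ρ*(x^2+16) + 2*a*ρ^3 := by
        rw [hρ]; ring
      nlinarith [k12, k3, k4, hρpos, hid]
    nlinarith [mul_le_mul_of_nonneg_right hmax hbig, mul_nonneg hapos.le hbr, hD]

lemma Bf_pos {E0 γ x : ℝ} (hE0 : 0 < E0) (hEx : E0 < x) (hq : 0 < qf E0 γ x) :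
    0 < Bf E0 γ x := by
  have hx : 0 < x := lt_trans hE0 hEx
  unfold Bf; nlinarith

/-- the numerator of (g1f)' is positive -/
lemma G_pos {E0 γ x : ℝ} (hE0 : 0 < E0) (hEx : E0 < x) (hq : 0 < qf E0 γ x)
    (hN : 0 < Nf E0 γ x) :
    0 < (x+4) * Bf E0 γ x * (3*(2*x+4-E0)*Nf E0 γ x + qf E0 γ x * Ndf E0 γ x)
      - qf E0 γ x * Nf E0 γ x * ((x+4)*(10*x+12-3*E0) + 3*Bf E0 γ x) := by
  have hx : 0 < x := lt_trans hE0 hEx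
  have hB : 0 < Bf E0 γ x := Bf_pos hE0 hEx hq
  have hT := T_nonneg (g := γ^2) hE0 hEx (sq_nonneg γ)
  have hid : (x+4) * Bf E0 γ x * (3*(2*x+4-E0)*Nf E0 γ x + qf E0 γ x * Ndf E0 γ x)
      - qf E0 γ x * Nf E0 γ x * ((x+4)*(10*x+12-3*E0) + 3*Bf E0 γ x)
      = 3 * Nf E0 γ x * Bf E0 γ x * ((x+4)^2 + γ^2)
        + qf E0 γ x * (x+4) *
          (((x^2-2*E0*x-4*E0) + (x+4)*(2*x-2*E0) - 3*γ^2) * (2*x*(2*x+4-E0) + ((x-E0)*(x+4)-γ^2))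
            - ((x+4)*(x^2-2*E0*x-4*E0) - γ^2*(3*x+4)) * (3*(2*x+4-E0) + 4*x)) := by
    unfold Nf Ndf Bf qf; ring
  rw [hid]
  have h1 : 0 < 3 * Nf E0 γ x * Bf E0 γ x * ((x+4)^2 + γ^2) := by
    have : (0:ℝ) < (x+4)^2 + γ^2 := by positivity
    positivity
  nlinarith [mul_nonneg (mul_nonneg hq.le (by linarith : (0:ℝ) ≤ x+4)) hT]

/-- positivity of N propagates upward -/
lemma Nf_pos_of_lt {E0 γ x y : ℝ} (hE0 : 0 < E0) (hγE : γ^2 ≤ E0) (hEx : E0 < x)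
    (hN : 0 < Nf E0 γ x) (hxy : x < y) : 0 < Nf E0 γ y := by
  have hx : 0 < x := lt_trans hE0 hEx
  have hρ : (0:ℝ) < x + 4 := by linarith
  have hm : 0 < x^2 - 2*E0*x - 4*E0 := by
    by_contra hc
    push_neg at hc
    unfold Nf at hN
    nlinarith [mul_nonpos_of_nonneg_of_nonpos hρ.le hc, sq_nonneg γ]
  have h2E : 2*E0 < x := by nlinarith
  have hid : Nf E0 γ y - Nf E0 γ x
      = (y-x) * ((x^2-2*E0*x-4*E0) + (y+4)*(y+x-2*E0) - 3*γ^2) := by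
    unfold Nf; ring
  have hbr : 0 < (x^2-2*E0*x-4*E0) + (y+4)*(y+x-2*E0) - 3*γ^2 := by
    have h1 : 2*E0 < y + x - 2*E0 := by linarith
    have h2 : (4:ℝ) < y + 4 := by linarith
    have h3 : 8*E0 < (y+4)*(y+x-2*E0) := by nlinarith
    nlinarith
  nlinarith [mul_pos (show (0:ℝ) < y - x by linarith) hbr]

noncomputable def adf (E0 γ x : ℝ) : ℝ := -(4*γ^4*Bf E0 γ x)/(x^2*(qf E0 γ x)^3)
noncomputable def psif (E0 γ x : ℝ) : ℝ := qf E0 γ x / (x*(x+4)^2)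
noncomputable def psdf (E0 γ x : ℝ) : ℝ := -(Nf E0 γ x)/(x^2*(x+4)^3)
noncomputable def uu (t : ℝ) : ℝ := t*(1-2*t)/(2*(1-t)^2)
noncomputable def tauf (E0 γ x : ℝ) : ℝ := (1 - Real.sqrt (1-3*alf E0 γ x))/3
noncomputable def Wf (E0 γ μ x : ℝ) : ℝ := γ^2/μ * psif E0 γ x - 1 - uu (tauf E0 γ x)
noncomputable def g1f (E0 γ x : ℝ) : ℝ :=
  (qf E0 γ x)^3 * Nf E0 γ x / (Bf E0 γ x * (x+4)^3)

lemma hasDerivAt_qf {E0 γ x : ℝ} : HasDerivAt (fun y => qf E0 γ y) (2*x+4-E0) x := by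
  have h : HasDerivAt (fun y : ℝ => (y - E0)*(y+4) - γ^2)
      (1*(x+4) + (x-E0)*1) x :=
    (((hasDerivAt_id x).sub_const E0).mul ((hasDerivAt_id x).add_const 4)).sub_const _
  simp only [qf]
  refine h.congr_deriv ?_; ring

lemma hasDerivAt_Nf {E0 γ x : ℝ} : HasDerivAt (fun y => Nf E0 γ y) (Ndf E0 γ x) x := by
  have h1 : HasDerivAt (fun y : ℝ => y^2 - 2*E0*y - 4*E0) (2*x^1 - 2*E0) x := by
    have h := ((hasDerivAt_pow 2 x).sub ((hasDerivAt_id x).const_mul (2*E0))).sub_const (4*E0)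
    refine h.congr_deriv ?_
    push_cast
    ring
  have h2 : HasDerivAt (fun y : ℝ => (y+4)*(y^2-2*E0*y-4*E0))
      (1*(x^2-2*E0*x-4*E0) + (x+4)*(2*x^1-2*E0)) x :=
    ((hasDerivAt_id x).add_const 4).mul h1
  have h3 : HasDerivAt (fun y : ℝ => γ^2*(3*y+4)) (γ^2*3) x := by
    have := ((hasDerivAt_id x).const_mul (3:ℝ)).add_const (4:ℝ) |>.const_mul (γ^2)
    simpa using this
  have h := h2.sub h3
  simp only [Nf, Ndf]
  refine h.congr_deriv ?_; ring

lemma hasDerivAt_psif {E0 γ x : ℝ} (hx : 0 < x) :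
    HasDerivAt (fun y => psif E0 γ y) (psdf E0 γ x) x := by
  have hρ : (0:ℝ) < x + 4 := by linarith
  have hden : HasDerivAt (fun y : ℝ => y*(y+4)^2)
      (1*(x+4)^2 + x*(2*(x+4)^1*1)) x :=
    (hasDerivAt_id x).mul (((hasDerivAt_id x).add_const 4).pow 2)
  have h := (hasDerivAt_qf (E0:=E0) (γ:=γ)).div hden (by positivity)
  simp only [psif, psdf]
  refine h.congr_deriv ?_
  field_simp
  unfold Nf qf
  ring

lemma hasDerivAt_alf {E0 γ x : ℝ} (hx : 0 < x) (hq : qf E0 γ x ≠ 0) :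
    HasDerivAt (fun y => alf E0 γ y) (adf E0 γ x) x := by
  have hden : HasDerivAt (fun y : ℝ => y*(qf E0 γ y)^2)
      (1*(qf E0 γ x)^2 + x*(2*(qf E0 γ x)^1*(2*x+4-E0))) x :=
    (hasDerivAt_id x).mul ((hasDerivAt_qf).pow 2)
  have h := (hasDerivAt_const x (4*γ^4)).div hden (by positivity)
  simp only [alf, adf]
  refine h.congr_deriv ?_
  field_simp
  unfold Bf qf
  ring

lemma sqrt_eq_tau {E0 γ x : ℝ} : Real.sqrt (1-3*alf E0 γ x) = 1 - 3*tauf E0 γ x := by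
  unfold tauf; ring

lemma hasDerivAt_tauf {E0 γ x : ℝ} (hx : 0 < x) (hq : qf E0 γ x ≠ 0)
    (hav : 0 < 1 - 3*alf E0 γ x) :
    HasDerivAt (fun y => tauf E0 γ y)
      (adf E0 γ x / (2*Real.sqrt (1-3*alf E0 γ x))) x := by
  have hv : HasDerivAt (fun y => 1-3*alf E0 γ y) (-(3*adf E0 γ x)) x := by
    have := ((hasDerivAt_alf hx hq).const_mul (3:ℝ)).const_sub 1
    simpa using this
  have hs : HasDerivAt (fun y => Real.sqrt (1-3*alf E0 γ y))
      (1/(2*Real.sqrt (1-3*alf E0 γ x)) * -(3*adf E0 γ x)) x :=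
    (Real.hasDerivAt_sqrt hav.ne').comp x hv
  have h := (hs.const_sub 1).div_const 3
  have hsp : 0 < Real.sqrt (1-3*alf E0 γ x) := Real.sqrt_pos.mpr hav
  simp only [tauf]
  refine h.congr_deriv ?_
  field_simp

lemma hasDerivAt_uu {t : ℝ} (ht : t ≠ 1) :
    HasDerivAt uu ((1-3*t)/(2*(1-t)^3)) t := by
  have hnum : HasDerivAt (fun s : ℝ => s*(1-2*s)) (1*(1-2*t) + t*(-2)) t := by
    exact (hasDerivAt_id t).mul (by simpa using ((hasDerivAt_id t).const_mul (2:ℝ)).const_sub 1)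
  have hden : HasDerivAt (fun s : ℝ => 2*(1-s)^2) (2*(2*(1-t)^1*(-1))) t := by
    have h1 : HasDerivAt (fun s : ℝ => 1 - s) (-1 : ℝ) t := by
      simpa using (hasDerivAt_id t).const_sub 1
    exact (h1.pow 2).const_mul 2
  have h := hnum.div hden (by
    have : (1-t) ≠ 0 := fun hc => ht (by linarith)
    positivity)
  have huu : uu = fun s : ℝ => s*(1-2*s)/(2*(1-s)^2) := rfl
  rw [huu]
  refine h.congr_deriv ?_
  have h1t : (1-t) ≠ 0 := fun hc => ht (by linarith)
  field_simp
  ring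

lemma hasDerivAt_Wf {E0 γ μ x : ℝ} (hx : 0 < x) (hq : qf E0 γ x ≠ 0)
    (hav : 0 < 1 - 3*alf E0 γ x) (hal : 0 < alf E0 γ x) :
    HasDerivAt (fun y => Wf E0 γ μ y)
      (γ^2/μ * psdf E0 γ x - adf E0 γ x/(4*(1-tauf E0 γ x)^3)) x := by
  have hsp : 0 < Real.sqrt (1-3*alf E0 γ x) := Real.sqrt_pos.mpr hav
  have hs1 : Real.sqrt (1-3*alf E0 γ x) < 1 := by
    exact (Real.sqrt_lt' one_pos).mpr (by nlinarith)
  have htau1 : tauf E0 γ x ≠ 1 := by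
    have := sqrt_eq_tau (E0:=E0) (γ:=γ) (x:=x)
    intro hc; rw [hc] at this; nlinarith
  have h1 : HasDerivAt (fun y => γ^2/μ * psif E0 γ y - 1) (γ^2/μ * psdf E0 γ x) x :=
    ((hasDerivAt_psif hx).const_mul (γ^2/μ)).sub_const 1
  have h2 : HasDerivAt (fun y => uu (tauf E0 γ y))
      ((1-3*tauf E0 γ x)/(2*(1-tauf E0 γ x)^3)
        * (adf E0 γ x / (2*Real.sqrt (1-3*alf E0 γ x)))) x :=
    (hasDerivAt_uu htau1).comp x (hasDerivAt_tauf hx hq hav)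
  have h := h1.sub h2
  have heq : (1-3*tauf E0 γ x)/(2*(1-tauf E0 γ x)^3)
        * (adf E0 γ x / (2*Real.sqrt (1-3*alf E0 γ x)))
      = adf E0 γ x/(4*(1-tauf E0 γ x)^3) := by
    rw [sqrt_eq_tau] at hsp ⊢
    have h1t : (1 - tauf E0 γ x) ≠ 0 := fun hc => htau1 (by linarith)
    field_simp
    ring
  rw [heq] at h
  exact h

lemma qf_le {E0 γ x y : ℝ} (hE0 : 0 < E0) (hE : E0 < x) (hxy : x ≤ y) :
    qf E0 γ x ≤ qf E0 γ y := by
  rcases eq_or_lt_of_le hxy with h | h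
  · rw [h]
  · exact (qf_lt hE0 hE h).le

lemma alf_le {E0 γ x y : ℝ} (hγ : 0 < γ) (hE0 : 0 < E0) (hE : E0 < x)
    (hq : 0 < qf E0 γ x) (hxy : x ≤ y) : alf E0 γ y ≤ alf E0 γ x := by
  rcases eq_or_lt_of_le hxy with h | h
  · rw [h]
  · exact (alf_lt hγ hE0 hE hq h).le

lemma alf_pos {E0 γ x : ℝ} (hγ : 0 < γ) (hx : 0 < x) (hq : 0 < qf E0 γ x) :
    0 < alf E0 γ x := by
  unfold alf; positivity

lemma t_alpha_lt {t : ℝ} (h1 : 0 < t) (h2 : t < 1/3) : t*(2-3*t) < 1/3 := by nlinarith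

lemma tau_mem {E0 γ x : ℝ} (hal : 0 < alf E0 γ x) (hav : alf E0 γ x < 1/3) :
    0 < tauf E0 γ x ∧ tauf E0 γ x < 1/3 := by
  have hv : 0 < 1 - 3*alf E0 γ x := by linarith
  have hsp : 0 < Real.sqrt (1-3*alf E0 γ x) := Real.sqrt_pos.mpr hv
  have hs1 : Real.sqrt (1-3*alf E0 γ x) < 1 := (Real.sqrt_lt' one_pos).mpr (by nlinarith)
  constructor <;> (unfold tauf; nlinarith)

lemma tau_lt {E0 γ x y : ℝ} (haxy : alf E0 γ y < alf E0 γ x) (hay : 0 < alf E0 γ y)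
    (hax3 : alf E0 γ x < 1/3) :
    tauf E0 γ y < tauf E0 γ x := by
  have h := Real.sqrt_lt_sqrt (show 0 ≤ 1 - 3*alf E0 γ x by linarith)
    (show 1 - 3*alf E0 γ x < 1 - 3*alf E0 γ y by linarith)
  unfold tauf; linarith

lemma hasDerivAt_Bf {E0 γ x : ℝ} : HasDerivAt (fun y => Bf E0 γ y) (10*x+12-3*E0) x := by
  have h2 : HasDerivAt (fun y : ℝ => 2*y*(2*y+4-E0))
      ((2*1)*(2*x+4-E0) + (2*x)*(2*1)) x := by
    have ha : HasDerivAt (fun y : ℝ => 2*y) (2*1) x := (hasDerivAt_id x).const_mul 2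
    have hb : HasDerivAt (fun y : ℝ => 2*y+4-E0) (2*1) x := (ha.add_const 4).sub_const E0
    exact ha.mul hb
  have h := (hasDerivAt_qf (E0:=E0) (γ:=γ)).add h2
  simp only [Bf]
  refine h.congr_deriv ?_; ring

lemma deriv_g1f_pos {E0 γ x : ℝ} (hE0 : 0 < E0) (hEx : E0 < x) (hq : 0 < qf E0 γ x)
    (hN : 0 < Nf E0 γ x) : 0 < deriv (fun y => g1f E0 γ y) x := by
  have hx : 0 < x := lt_trans hE0 hEx
  have hρ : (0:ℝ) < x+4 := by linarith
  have hB : 0 < Bf E0 γ x := Bf_pos hE0 hEx hq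
  have hnum : HasDerivAt (fun y => (qf E0 γ y)^3 * Nf E0 γ y)
      ((3*(qf E0 γ x)^2*(2*x+4-E0)) * Nf E0 γ x + (qf E0 γ x)^3 * Ndf E0 γ x) x := by
    have h1 : HasDerivAt (fun y => (qf E0 γ y)^3) (3*(qf E0 γ x)^2*(2*x+4-E0)) x := by
      have := (hasDerivAt_qf (E0:=E0) (γ:=γ) (x:=x)).fun_pow 3
      refine this.congr_deriv ?_
      simp
    exact h1.mul hasDerivAt_Nf
  have hden : HasDerivAt (fun y => Bf E0 γ y * (y+4)^3)
      ((10*x+12-3*E0) * (x+4)^3 + Bf E0 γ x * (3*(x+4)^2*1)) x := by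
    have h2 : HasDerivAt (fun y : ℝ => (y+4)^3) (3*(x+4)^2*1) x := by
      have := ((hasDerivAt_id x).add_const 4).fun_pow 3
      refine this.congr_deriv ?_
      simp
    exact hasDerivAt_Bf.mul h2
  have h := hnum.fun_div hden (by positivity)
  have hg1 : (fun y => g1f E0 γ y) = fun y =>
      ((qf E0 γ y)^3 * Nf E0 γ y) / (Bf E0 γ y * (y+4)^3) := by
    funext y; rfl
  rw [hg1, h.deriv]
  apply div_pos
  · have hid : (3*(qf E0 γ x)^2*(2*x+4-E0)) * Nf E0 γ x * (Bf E0 γ x * (x+4)^3)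
        + (qf E0 γ x)^3 * Ndf E0 γ x * (Bf E0 γ x * (x+4)^3)
        - (qf E0 γ x)^3 * Nf E0 γ x * ((10*x+12-3*E0) * (x+4)^3 + Bf E0 γ x * (3*(x+4)^2*1))
        = (qf E0 γ x)^2 * (x+4)^2 *
          ((x+4) * Bf E0 γ x * (3*(2*x+4-E0)*Nf E0 γ x + qf E0 γ x * Ndf E0 γ x)
            - qf E0 γ x * Nf E0 γ x * ((x+4)*(10*x+12-3*E0) + 3*Bf E0 γ x)) := by
      ring
    have hG := G_pos hE0 hEx hq hN
    nlinarith [mul_pos (mul_pos (pow_pos hq 2) (pow_pos hρ 2)) hG]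
  · positivity

lemma Wf_zero {E0 γ μ x t : ℝ} (hγ : 0 < γ) (hμ : 0 < μ) (hx : 0 < x)
    (hq : 0 < qf E0 γ x) (ht0 : 0 < t) (ht3 : t < 1/3)
    (ha : alf E0 γ x = t*(2-3*t)) (hb : bef E0 γ μ x = 2*t*(1-t)^2) :
    Wf E0 γ μ x = 0 := by
  have hρ : (0:ℝ) < x + 4 := by linarith
  have h1t : (0:ℝ) < 1 - t := by linarith
  have htau : tauf E0 γ x = t := by
    unfold tauf
    rw [ha, show 1-3*(t*(2-3*t)) = (1-3*t)^2 by ring, Real.sqrt_sq (by linarith)]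
    ring
  have hcore : γ^2/μ * psif E0 γ x * bef E0 γ μ x = alf E0 γ x := by
    unfold psif bef alf
    field_simp
  rw [hb, ha] at hcore
  have hψ : γ^2/μ * psif E0 γ x = (2-3*t)/(2*(1-t)^2) := by
    have h2 : (2-3*t)/(2*(1-t)^2) * (2*t*(1-t)^2) = t*(2-3*t) := by
      field_simp
    exact mul_right_cancel₀ (by positivity : (2*t*(1-t)^2) ≠ 0) (hcore.trans h2.symm)
  unfold Wf uu
  rw [htau, hψ]
  field_simp
  ring

lemma continuousAt_g1f {E0 γ z : ℝ} (hB : Bf E0 γ z ≠ 0) (hρ : z + 4 ≠ 0) :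
    ContinuousAt (fun y => g1f E0 γ y) z := by
  unfold g1f
  apply ContinuousAt.div
  · exact (by unfold qf Nf; continuity : Continuous fun y : ℝ =>
      (qf E0 γ y)^3 * Nf E0 γ y).continuousAt
  · exact (by unfold Bf qf; continuity : Continuous fun y : ℝ =>
      Bf E0 γ y * (y+4)^3).continuousAt
  · exact mul_ne_zero hB (pow_ne_zero 3 hρ)

lemma Bset_triple {E0 γ μ x1 x2 x3 : ℝ} (hE0 : 0 < E0) (hγ : 0 < γ) (hγE : γ^2 ≤ E0)
    (hμ : 0 < μ) (h12 : x1 < x2) (h23 : x2 < x3)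
    (hE1 : E0 < x1) (hq1 : 0 < qf E0 γ x1)
    (hE2 : E0 < x2) (hq2 : 0 < qf E0 γ x2)
    (hE3 : E0 < x3) (hq3 : 0 < qf E0 γ x3)
    (ht1 : ∃ t, 0 < t ∧ t < 1/3 ∧ alf E0 γ x1 = t*(2-3*t) ∧ bef E0 γ μ x1 = 2*t*(1-t)^2)
    (ht2 : ∃ t, 0 < t ∧ t < 1/3 ∧ alf E0 γ x2 = t*(2-3*t) ∧ bef E0 γ μ x2 = 2*t*(1-t)^2)
    (ht3 : ∃ t, 0 < t ∧ t < 1/3 ∧ alf E0 γ x3 = t*(2-3*t) ∧ bef E0 γ μ x3 = 2*t*(1-t)^2) :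
    False := by
  obtain ⟨t1, ht10, ht13, ha1, hb1⟩ := ht1
  obtain ⟨t2, ht20, ht23, ha2, hb2⟩ := ht2
  obtain ⟨t3, ht30, ht33, ha3, hb3⟩ := ht3
  have hx1 : 0 < x1 := lt_trans hE0 hE1
  have half1 : alf E0 γ x1 < 1/3 := by rw [ha1]; exact t_alpha_lt ht10 ht13
  have hreg : ∀ z ∈ Set.Icc x1 x3,
      E0 < z ∧ 0 < z ∧ 0 < qf E0 γ z ∧ 0 < alf E0 γ z ∧ alf E0 γ z < 1/3 := by
    intro z hz
    have hEz : E0 < z := lt_of_lt_of_le hE1 hz.1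
    have hz0 : 0 < z := lt_trans hE0 hEz
    have hqz : 0 < qf E0 γ z := lt_of_lt_of_le hq1 (qf_le hE0 hE1 hz.1)
    have hlez : alf E0 γ z ≤ alf E0 γ x1 := alf_le hγ hE0 hE1 hq1 hz.1
    exact ⟨hEz, hz0, hqz, alf_pos hγ hz0 hqz, lt_of_le_of_lt hlez half1⟩
  have hdiff : ∀ z ∈ Set.Icc x1 x3, HasDerivAt (fun y => Wf E0 γ μ y)
      (γ^2/μ * psdf E0 γ z - adf E0 γ z/(4*(1-tauf E0 γ z)^3)) z := by
    intro z hz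
    obtain ⟨hEz, hz0, hqz, haz, haz3⟩ := hreg z hz
    exact hasDerivAt_Wf hz0 hqz.ne' (by linarith) haz
  have hWc : ContinuousOn (fun y => Wf E0 γ μ y) (Set.Icc x1 x3) :=
    fun z hz => ((hdiff z hz).continuousAt).continuousWithinAt
  have hW1 : Wf E0 γ μ x1 = 0 := Wf_zero hγ hμ hx1 hq1 ht10 ht13 ha1 hb1
  have hW2 : Wf E0 γ μ x2 = 0 := Wf_zero hγ hμ (lt_trans hE0 hE2) hq2 ht20 ht23 ha2 hb2
  have hW3 : Wf E0 γ μ x3 = 0 := Wf_zero hγ hμ (lt_trans hE0 hE3) hq3 ht30 ht33 ha3 hb3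
  obtain ⟨c1, hc1mem, hc1⟩ := exists_deriv_eq_zero h12
    (hWc.mono (Set.Icc_subset_Icc le_rfl h23.le)) (hW1.trans hW2.symm)
  obtain ⟨c2, hc2mem, hc2⟩ := exists_deriv_eq_zero h23
    (hWc.mono (Set.Icc_subset_Icc h12.le le_rfl)) (hW2.trans hW3.symm)
  have hc1Icc : c1 ∈ Set.Icc x1 x3 :=
    ⟨hc1mem.1.le, le_trans hc1mem.2.le h23.le⟩
  have hc2Icc : c2 ∈ Set.Icc x1 x3 :=
    ⟨le_trans h12.le hc2mem.1.le, hc2mem.2.le⟩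
  -- key facts at critical points
  have hkey : ∀ c, c ∈ Set.Icc x1 x3 → deriv (fun y => Wf E0 γ μ y) c = 0 →
      0 < Nf E0 γ c ∧ g1f E0 γ c * (1 - tauf E0 γ c)^3 = μ*γ^2 := by
    intro c hcmem hder
    obtain ⟨hEc, hc0, hqc, hac, hac3⟩ := hreg c hcmem
    have hD := hdiff c hcmem
    rw [hD.deriv] at hder
    have hτ := tau_mem hac hac3
    have h1τ : 0 < 1 - tauf E0 γ c := by linarith [hτ.2]
    have hρc : (0:ℝ) < c+4 := by linarith
    have hBc : 0 < Bf E0 γ c := Bf_pos hE0 hEc hqc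
    have hadf : adf E0 γ c < 0 := by
      unfold adf
      have hpos : 0 < (4*γ^4*Bf E0 γ c)/(c^2*(qf E0 γ c)^3) := by positivity
      rw [neg_div]
      linarith
    have hNpos : 0 < Nf E0 γ c := by
      by_contra hcn
      push_neg at hcn
      have hψ : 0 ≤ psdf E0 γ c := by
        unfold psdf
        exact div_nonneg (by linarith) (mul_nonneg (sq_nonneg c) (pow_pos hρc 3).le)
      have hterm1 : 0 ≤ γ^2/μ * psdf E0 γ c := mul_nonneg (by positivity) hψ
      have hterm2 : adf E0 γ c/(4*(1-tauf E0 γ c)^3) < 0 :=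
        div_neg_of_neg_of_pos hadf (by positivity)
      linarith
    refine ⟨hNpos, ?_⟩
    have hEq : γ^2/μ * psdf E0 γ c = adf E0 γ c/(4*(1-tauf E0 γ c)^3) := by linarith
    unfold psdf adf at hEq
    rw [div_mul_div_comm, div_div, div_eq_div_iff (by positivity) (by positivity)] at hEq
    have hcan : (4*c^2*γ^2) * ((qf E0 γ c)^3 * Nf E0 γ c * (1 - tauf E0 γ c)^3)
        = (4*c^2*γ^2) * (μ*γ^2 * (Bf E0 γ c * (c+4)^3)) := by
      linear_combination (-1 : ℝ) * hEq
    have gEq := mul_left_cancel₀ (by positivity : (4*c^2*γ^2) ≠ 0) hcan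
    unfold g1f
    rw [div_mul_eq_mul_div, div_eq_iff (by positivity)]
    linarith [gEq]
  obtain ⟨hN1, hg1⟩ := hkey c1 hc1Icc hc1
  obtain ⟨hN2, hg2⟩ := hkey c2 hc2Icc hc2
  have hc12 : c1 < c2 := lt_trans hc1mem.2 hc2mem.1
  have hEc1 : E0 < c1 := lt_trans hE1 hc1mem.1
  have hqc1 : 0 < qf E0 γ c1 := (hreg c1 hc1Icc).2.2.1
  have hqc2 : 0 < qf E0 γ c2 := (hreg c2 hc2Icc).2.2.1
  have hEc2 : E0 < c2 := lt_trans hEc1 hc12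
  -- strict monotonicity of g1f on [c1, c2]
  have hmono : StrictMonoOn (fun y => g1f E0 γ y) (Set.Icc c1 c2) := by
    apply strictMonoOn_of_deriv_pos (convex_Icc c1 c2)
    · intro z hz
      have hEz : E0 < z := lt_of_lt_of_le hEc1 hz.1
      have hqz : 0 < qf E0 γ z := lt_of_lt_of_le hqc1 (qf_le hE0 hEc1 hz.1)
      have hBz : 0 < Bf E0 γ z := Bf_pos hE0 hEz hqz
      exact (continuousAt_g1f hBz.ne' (by linarith)).continuousWithinAt
    · intro z hz
      rw [interior_Icc] at hz
      have hEz : E0 < z := lt_trans hEc1 hz.1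
      have hqz : 0 < qf E0 γ z := lt_trans hqc1 (qf_lt hE0 hEc1 hz.1)
      have hNz : 0 < Nf E0 γ z := Nf_pos_of_lt hE0 hγE hEc1 hN1 hz.1
      exact deriv_g1f_pos hE0 hEz hqz hNz
  have hlt : g1f E0 γ c1 < g1f E0 γ c2 :=
    hmono (Set.left_mem_Icc.mpr hc12.le) (Set.right_mem_Icc.mpr hc12.le) hc12
  -- tau comparison
  have hα21 : alf E0 γ c2 < alf E0 γ c1 := alf_lt hγ hE0 hEc1 hqc1 hc12
  have hac2 := (hreg c2 hc2Icc).2.2.2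
  have hac1 := (hreg c1 hc1Icc).2.2.2
  have hτ21 : tauf E0 γ c2 < tauf E0 γ c1 := tau_lt hα21 hac2.1 hac1.2
  have hτ1 := tau_mem hac1.1 hac1.2
  have hτ2 := tau_mem hac2.1 hac2.2
  have hpow : (1 - tauf E0 γ c1)^3 < (1 - tauf E0 γ c2)^3 := by
    apply pow_lt_pow_left₀ (by linarith) (by linarith [hτ1.2])
    norm_num
  have hg1pos : 0 < g1f E0 γ c1 := by
    unfold g1f
    have hρ1 : (0:ℝ) < c1 + 4 := by linarith
    have hB1 : 0 < Bf E0 γ c1 := Bf_pos hE0 hEc1 hqc1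
    positivity
  have hfinal : g1f E0 γ c1 * (1 - tauf E0 γ c1)^3 < g1f E0 γ c2 * (1 - tauf E0 γ c2)^3 :=
    mul_lt_mul'' hlt hpow hg1pos.le (pow_nonneg (by linarith [hτ1.2]) 3)
  rw [hg1, hg2] at hfinal
  exact lt_irrefl _ hfinal

lemma sigma_eq {E0 γ x : ℝ} (hρ : x + 4 ≠ 0) :
    x - E0 - γ^2/(x+4) = qf E0 γ x / (x+4) := by
  field_simp [qf]
  rfl

lemma alphaPar_eq {E0 γ x : ℝ} (hx : 0 < x) (hq : 0 < qf E0 γ x) :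
    alphaPar E0 γ x = alf E0 γ x := by
  have hρ : x + 4 ≠ 0 := by linarith
  rw [alphaPar, alf, sigma_eq hρ, div_pow]
  rw [show x * (qf E0 γ x ^2 / (x+4)^2) * (x+4)^2 = x * qf E0 γ x ^2 by
    field_simp]

lemma betaPar_eq {E0 γ μ x : ℝ} (hx : 0 < x) (hq : 0 < qf E0 γ x) :
    betaPar E0 γ μ x = bef E0 γ μ x := by
  have hρ : (0:ℝ) < x + 4 := by linarith
  rw [betaPar, bef, sigma_eq hρ.ne', div_pow]
  rw [div_eq_div_iff (by positivity) (by positivity)]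
  field_simp

/-- Extraction: a transition frequency gives `t ∈ (0,2/3)` with the two relations. -/
lemma extract {E0 γ μ ω : ℝ} (hE0 : 0 < E0) (hγ : 0 < γ) (hμ : 0 < μ)
    (h : IsTransitionFreq E0 γ μ ω) :
    0 < ω ∧ E0 < ω ∧ 0 < qf E0 γ ω ∧
      ∃ t : ℝ, 0 < t ∧ t < 2/3 ∧ alf E0 γ ω = t * (2 - 3*t) ∧
        bef E0 γ μ ω = 2 * t * (1 - t)^2 := by
  obtain ⟨hω, hq, P, hf, hf'⟩ := h
  have hq' : 0 < qf E0 γ ω := hq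
  have hE0ω : E0 < ω := by
    rcases lt_or_ge E0 ω with h | h
    · exact h
    · exfalso; have : (ω - E0) * (ω + 4) ≤ 0 :=
        mul_nonpos_of_nonpos_of_nonneg (by linarith) (by linarith)
      have := sq_nonneg γ; unfold qf at hq'; nlinarith
  have hα : alphaPar E0 γ ω = -(3*P^2 - 4*P + 1) := by
    unfold cubicF' at hf'; linarith
  have hαa : alf E0 γ ω = (1-P) * (2 - 3*(1-P)) := by
    rw [← alphaPar_eq hω hq', hα]; ring
  have hαpos : 0 < alf E0 γ ω := by
    unfold alf
    have h0 : 0 < ω * (qf E0 γ ω)^2 := by positivity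
    positivity
  refine ⟨hω, hE0ω, hq', 1 - P, ?_, ?_, hαa, ?_⟩
  · nlinarith [hαa ▸ hαpos]
  · nlinarith [hαa ▸ hαpos]
  · rw [← betaPar_eq hω hq']
    have hβ : betaPar E0 γ μ ω = P * (P-1)^2 + alphaPar E0 γ ω * P := by
      unfold cubicF at hf; linarith
    rw [hβ, hα]; ring

lemma sort3 {P : ℝ → Prop} {a b c : ℝ} (ha : P a) (hb : P b) (hc : P c)
    (hab : a ≠ b) (hac : a ≠ c) (hbc : b ≠ c) :
    ∃ x y z, P x ∧ P y ∧ P z ∧ x < y ∧ y < z := by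
  rcases lt_trichotomy a b with h1 | h1 | h1
  · rcases lt_trichotomy b c with h2 | h2 | h2
    · exact ⟨a, b, c, ha, hb, hc, h1, h2⟩
    · exact absurd h2 hbc
    · rcases lt_trichotomy a c with h3 | h3 | h3
      · exact ⟨a, c, b, ha, hc, hb, h3, h2⟩
      · exact absurd h3 hac
      · exact ⟨c, a, b, hc, ha, hb, h3, h1⟩
  · exact absurd h1 hab
  · rcases lt_trichotomy a c with h2 | h2 | h2
    · exact ⟨b, a, c, hb, ha, hc, h1, h2⟩
    · exact absurd h2 hac
    · rcases lt_trichotomy b c with h3 | h3 | h3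
      · exact ⟨b, c, a, hb, hc, ha, h3, h2⟩
      · exact absurd h3 hbc
      · exact ⟨c, b, a, hc, hb, ha, h3, h1⟩

end AMTF
end AMTFsection

open AMTF

/-- for small `γ` and `μ ≤ Cγ`, there are at most three transition
frequencies. -/
theorem at_most_three_transition_frequencies
    (E0 C : ℝ) (hE0 : 0 < E0) (hC : 0 < C) :
    ∃ γ0 > 0, ∀ γ : ℝ, 0 < γ → γ < γ0 → ∀ μ : ℝ, 0 < μ → μ ≤ C * γ →
      {ω : ℝ | IsTransitionFreq E0 γ μ ω}.encard ≤ 3 := by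
    set M : ℝ := 3*(E0+1)^2+16*(E0+1)+16 with hMdef
    have hMpos : 0 < M := by rw [hMdef]; nlinarith
    set c3 : ℝ := (E0+4)/(216*C+1) with hc3def
    set c4 : ℝ := (E0*(E0+4)^3)^3/(M^3*(27*C*(E0+5)^2)+1) with hc4def
    have hc3pos : 0 < c3 := by rw [hc3def]; positivity
    have hc4pos : 0 < c4 := by
      rw [hc4def]
      have h1 : 0 < (E0*(E0+4)^3)^3 := by positivity
      have h2 : 0 < M^3*(27*C*(E0+5)^2)+1 := by positivity
      positivity
    refine ⟨min 1 (min E0 (min c3 c4)), by positivity, ?_⟩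
    intro γ hγ hγ0 μ hμ hμC
    have hγ1 : γ < 1 := lt_of_lt_of_le hγ0 (min_le_left _ _)
    have hγE0 : γ < E0 := lt_of_lt_of_le hγ0 (le_trans (min_le_right _ _) (min_le_left _ _))
    have hγc3 : γ < c3 := lt_of_lt_of_le hγ0
      (le_trans (min_le_right _ _) (le_trans (min_le_right _ _) (min_le_left _ _)))
    have hγc4 : γ < c4 := lt_of_lt_of_le hγ0
      (le_trans (min_le_right _ _) (le_trans (min_le_right _ _) (min_le_right _ _)))
    have hγ3γ : γ^3 < γ := by
      have h2 : γ^2 < 1 := by nlinarith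
      nlinarith
    have hγE : γ^2 ≤ E0 := by nlinarith
    have hc3 : 216*C*γ^3 ≤ E0+4 := by
      have h1 : γ^3 < c3 := lt_trans hγ3γ hγc3
      rw [hc3def, lt_div_iff₀ (by positivity)] at h1
      nlinarith [pow_pos hγ 3]
    have hc4 : M^3 * (27*C*(E0+5)^2*γ^3) < (E0*(E0+4)^3)^3 := by
      have h1 : γ^3 < c4 := lt_trans hγ3γ hγc4
      rw [hc4def, lt_div_iff₀ (by positivity)] at h1
      nlinarith [pow_pos hγ 3, pow_pos hMpos 3, mul_pos (pow_pos hMpos 3)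
        (by positivity : (0:ℝ) < 27*C*(E0+5)^2)]
    -- the two classes
    set A : Set ℝ := {ω | 0 < ω ∧ E0 < ω ∧ 0 < qf E0 γ ω ∧
      ∃ t, 1/3 ≤ t ∧ t < 2/3 ∧ alf E0 γ ω = t*(2-3*t) ∧ bef E0 γ μ ω = 2*t*(1-t)^2} with hAdef
    set B : Set ℝ := {ω | 0 < ω ∧ E0 < ω ∧ 0 < qf E0 γ ω ∧
      ∃ t, 0 < t ∧ t < 1/3 ∧ alf E0 γ ω = t*(2-3*t) ∧ bef E0 γ μ ω = 2*t*(1-t)^2} with hBdef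
    have hcov : {ω : ℝ | IsTransitionFreq E0 γ μ ω} ⊆ A ∪ B := by
      intro ω hω
      obtain ⟨h0, hE, hq, t, ht0, ht23, hat, hbt⟩ := extract hE0 hγ hμ hω
      rcases lt_or_ge t (1/3) with h | h
      · exact Or.inr ⟨h0, hE, hq, t, ht0, h, hat, hbt⟩
      · exact Or.inl ⟨h0, hE, hq, t, h, ht23, hat, hbt⟩
    have hA1 : A.encard ≤ 1 := by
      rw [Set.encard_le_one_iff]
      intro a b haA hbA
      by_contra hne
      rw [hAdef] at haA hbA
      obtain ⟨ha0, haE, haq, hta⟩ := haA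
      obtain ⟨hb0, hbE, hbq, htb⟩ := hbA
      rcases lt_or_gt_of_ne hne with h | h
      · exact Aset_pair hE0 hC hγ hγ1 hμ hμC hc3 hc4 h haE haq hbE hbq hta htb
      · exact Aset_pair hE0 hC hγ hγ1 hμ hμC hc3 hc4 h hbE hbq haE haq htb hta
    have hB2 : B.encard ≤ 2 := by
      by_contra hcon
      push_neg at hcon
      have h3 : (3 : ℕ∞) ≤ B.encard := Order.add_one_le_of_lt hcon
      obtain ⟨T, hTB, hT3⟩ := Set.exists_subset_encard_eq h3
      obtain ⟨a, b, c, hab, hac, hbc, hTeq⟩ := Set.encard_eq_three.mp hT3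
      have haB : a ∈ B := hTB (by rw [hTeq]; exact Set.mem_insert _ _)
      have hbB : b ∈ B := hTB (by rw [hTeq]; right; exact Set.mem_insert _ _)
      have hcB : c ∈ B := hTB (by rw [hTeq]; right; right; rfl)
      obtain ⟨x, y, z, hx, hy, hz, hxy, hyz⟩ := sort3 (P := fun w => w ∈ B) haB hbB hcB hab hac hbc
      rw [hBdef] at hx hy hz
      obtain ⟨hx0, hxE, hxq, htx⟩ := hx
      obtain ⟨hy0, hyE, hyq, hty⟩ := hy
      obtain ⟨hz0, hzE, hzq, htz⟩ := hz
      exact Bset_triple hE0 hγ hγE hμ hxy hyz hxE hxq hyE hyq hzE hzq htx hty htz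
    calc {ω : ℝ | IsTransitionFreq E0 γ μ ω}.encard ≤ (A ∪ B).encard := Set.encard_mono hcov
      _ ≤ A.encard + B.encard := Set.encard_union_le A B
      _ ≤ 1 + 2 := add_le_add hA1 hB2
      _ = 3 := by norm_num
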